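/- The depth-3 iterated integral H(0,0,1) at 1, defined as ∫_0^1 (1/t₁) ∫_0^{t₁} (1/t₂) ∫_0^{t₂} (1/(t₃-1)) dt₃ dt₂ dt₁, equals -ζ(3). -/

import Mathlib

open MeasureTheory Set

lemma h001_inner {t : ℝ} (ht : t < 1) :
    (∫ s in (0:ℝ)..t, 1/(s-1)) = Real.log (1 - t) := by
  have h : ∀ x ∈ Set.uIcc (0:ℝ) t, HasDerivAt (fun y => Real.log (1 - y)) (1/(x-1)) x := by
    intro x hx
    have hx1 : x < 1 := lt_of_le_of_lt hx.2 (max_lt one_pos ht)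
    have h1 : (1 - x) ≠ 0 := by linarith
    have h2 : HasDerivAt (fun y : ℝ => 1 - y) (-1) x := by
      simpa using ((hasDerivAt_id x).const_sub 1)
    have := (Real.hasDerivAt_log h1).comp x h2
    convert this using 1
    · rfl
    · rfl
    · rfl
    have hx2 : x - 1 ≠ 0 := sub_ne_zero.mpr (ne_of_lt hx1)
    have h3 : (1 - x)⁻¹ = -(x - 1)⁻¹ := by rw [← inv_neg, neg_sub]
    rw [h3]
    ring
  have hi : IntervalIntegrable (fun s : ℝ => 1/(s-1)) volume 0 t := by
    apply ContinuousOn.intervalIntegrable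
    apply ContinuousOn.div continuousOn_const (by fun_prop)
    intro x hx
    have hx1 : x < 1 := lt_of_le_of_lt hx.2 (max_lt one_pos ht)
    intro h
    rw [sub_eq_zero] at h
    linarith [h.symm ▸ hx1]
  rw [intervalIntegral.integral_eq_sub_of_hasDerivAt h hi]
  simp

lemma h001_log_div {t : ℝ} (h0 : 0 < t) (h1 : t < 1) :
    (1/t) * Real.log (1 - t) = -∑' n : ℕ, t^n/((n:ℝ)+1) := by
  have hs := Real.hasSum_pow_div_log_of_abs_lt_one
    (abs_lt.mpr ⟨by linarith, h1⟩ : |t| < 1)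
  have hs2 := hs.mul_left (1/t)
  have he : (fun n : ℕ => (1/t) * (t^(n+1)/((n:ℝ)+1))) = fun n : ℕ => t^n/((n:ℝ)+1) := by
    funext n
    rw [pow_succ]
    field_simp
  rw [he] at hs2
  rw [hs2.tsum_eq]
  ring

lemma h001_mid {t₁ : ℝ} (h0 : 0 < t₁) (h1 : t₁ < 1) :
    (∫ t₂ in (0:ℝ)..t₁, (1/t₂) * ∫ t₃ in (0:ℝ)..t₂, 1/(t₃-1))
      = -∑' n : ℕ, t₁^(n+1)/((n:ℝ)+1)^2 := by
  have key : ∀ n : ℕ, ∫ t in Ioc (0:ℝ) t₁, t^n/((n:ℝ)+1) = t₁^(n+1)/((n:ℝ)+1)^2 := by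
    intro n
    rw [← intervalIntegral.integral_of_le h0.le, intervalIntegral.integral_div,
      integral_pow]
    have : ((n:ℝ)+1) ≠ 0 := by positivity
    field_simp
    ring
  have hint : ∀ n : ℕ, IntegrableOn (fun t : ℝ => t^n/((n:ℝ)+1)) (Ioc 0 t₁) := by
    intro n
    exact (Continuous.integrableOn_Ioc (by fun_prop))
  have hnorm : Summable (fun n : ℕ => ∫ t in Ioc (0:ℝ) t₁, ‖t^n/((n:ℝ)+1)‖) := by
    have he : ∀ n : ℕ, ∫ t in Ioc (0:ℝ) t₁, ‖t^n/((n:ℝ)+1)‖ = t₁^(n+1)/((n:ℝ)+1)^2 := by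
      intro n
      rw [← key n]
      apply setIntegral_congr_fun measurableSet_Ioc
      intro t ht
      exact Real.norm_of_nonneg (div_nonneg (pow_nonneg ht.1.le n) (by positivity))
    simp_rw [he]
    apply Summable.of_nonneg_of_le (fun n => by positivity) (fun n => ?_)
      (summable_geometric_of_lt_one h0.le h1)
    calc t₁^(n+1)/((n:ℝ)+1)^2 ≤ t₁^(n+1)/1 := by
          gcongr
          nlinarith [Nat.cast_nonneg (α := ℝ) n]
      _ = t₁^(n+1) := div_one _
      _ ≤ t₁^n := pow_le_pow_of_le_one h0.le h1.le (Nat.le_succ n)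
  have hswap := MeasureTheory.integral_tsum_of_summable_integral_norm hint hnorm
  rw [intervalIntegral.integral_of_le h0.le]
  rw [setIntegral_congr_fun measurableSet_Ioc
    (g := fun t => -∑' n : ℕ, t^n/((n:ℝ)+1)) ?_]
  · rw [integral_neg, ← hswap]
    rw [tsum_congr key]
  · intro t ht
    have ht1 : t < 1 := lt_of_le_of_lt ht.2 h1
    simp only
    rw [h001_inner ht1]
    exact h001_log_div ht.1 ht1

lemma h001_outer :
    (∫ t₁ in (0:ℝ)..1, (1/t₁) *
        ∫ t₂ in (0:ℝ)..t₁, (1/t₂) *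
          ∫ t₃ in (0:ℝ)..t₂, 1/(t₃ - 1))
      = -∑' n : ℕ, 1/((n:ℝ)+1)^3 := by
  have key : ∀ n : ℕ, ∫ t in Ioo (0:ℝ) 1, t^n/((n:ℝ)+1)^2 = 1/((n:ℝ)+1)^3 := by
    intro n
    rw [← integral_Ioc_eq_integral_Ioo, ← intervalIntegral.integral_of_le zero_le_one,
      intervalIntegral.integral_div, integral_pow]
    have : ((n:ℝ)+1) ≠ 0 := by positivity
    field_simp
    ring
  have hint : ∀ n : ℕ, IntegrableOn (fun t : ℝ => t^n/((n:ℝ)+1)^2) (Ioo 0 1) := by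
    intro n
    exact ((Continuous.integrableOn_Ioc (by fun_prop)).mono_set Ioo_subset_Ioc_self)
  have h3 : Summable (fun n : ℕ => 1/((n:ℝ)+1)^3) := by
    have h := (summable_nat_add_iff 1).mpr
      (Real.summable_one_div_nat_pow.mpr (by norm_num : 1 < 3))
    simpa using h
  have hnorm : Summable (fun n : ℕ => ∫ t in Ioo (0:ℝ) 1, ‖t^n/((n:ℝ)+1)^2‖) := by
    have he : ∀ n : ℕ, ∫ t in Ioo (0:ℝ) 1, ‖t^n/((n:ℝ)+1)^2‖ = 1/((n:ℝ)+1)^3 := by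
      intro n
      rw [← key n]
      apply setIntegral_congr_fun measurableSet_Ioo
      intro t ht
      exact Real.norm_of_nonneg (div_nonneg (pow_nonneg ht.1.le n) (by positivity))
    simp_rw [he]
    exact h3
  have hswap := MeasureTheory.integral_tsum_of_summable_integral_norm hint hnorm
  rw [intervalIntegral.integral_of_le zero_le_one, integral_Ioc_eq_integral_Ioo]
  rw [setIntegral_congr_fun measurableSet_Ioo
    (g := fun t => -∑' n : ℕ, t^n/((n:ℝ)+1)^2) ?_]
  · rw [integral_neg, ← hswap, tsum_congr key]
  · intro t ht
    have ht0 : 0 < t := ht.1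
    simp only
    rw [h001_mid ht.1 ht.2, mul_neg, neg_inj, ← tsum_mul_left]
    apply tsum_congr
    intro n
    rw [pow_succ]
    field_simp

theorem stmt_10 :
    (↑(∫ t₁ in (0:ℝ)..1, (1/t₁) *
        ∫ t₂ in (0:ℝ)..t₁, (1/t₂) *
          ∫ t₃ in (0:ℝ)..t₂, 1/(t₃ - 1)) : ℂ)
      = -riemannZeta 3 := by
  rw [h001_outer]
  rw [zeta_eq_tsum_one_div_nat_add_one_cpow (by norm_num : 1 < Complex.re 3)]
  push_cast
  congr 1
  apply tsum_congr
  intro n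
  rw [show ((3:ℂ)) = ((3:ℕ):ℂ) from by norm_num, Complex.cpow_natCast]
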